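/- arXiv:1709.06079 — 2 statements merged into one kernel-verified Lean document; each statement's English description precedes it below -/
import Mathlib

section
/- Let V ∈ ℝ^{n×d} have full row rank n ≤ d and Σ = V Vᵀ. Among all P ∈ ℝ^{n×n} with (P V)(P V)ᵀ = I, the choice P* = Σ^{-1/2} minimizes tr((P V − V)(P V − V)ᵀ). -/
open Matrix

-- Cauchy–Schwarz style step: v ⬝ᵥ Q v ≤ v ⬝ᵥ v when QᵀQ = 1
lemma dot_mulVec_le {n : ℕ} {Q : Matrix (Fin n) (Fin n) ℝ} (hQ : Qᵀ * Q = 1)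
    (v : Fin n → ℝ) : v ⬝ᵥ Q.mulVec v ≤ v ⬝ᵥ v := by
  have hnorm : Q.mulVec v ⬝ᵥ Q.mulVec v = v ⬝ᵥ v := by
    calc Q.mulVec v ⬝ᵥ Q.mulVec v
        = (Q.mulVec v ᵥ* Q) ⬝ᵥ v := dotProduct_mulVec _ _ _
      _ = (Qᵀ.mulVec (Q.mulVec v)) ⬝ᵥ v := by rw [mulVec_transpose]
      _ = ((Qᵀ * Q).mulVec v) ⬝ᵥ v := by rw [mulVec_mulVec]
      _ = v ⬝ᵥ v := by rw [hQ, one_mulVec]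
  have hcs := Finset.sum_mul_sq_le_sq_mul_sq Finset.univ v (Q.mulVec v)
  have h1 : (v ⬝ᵥ Q.mulVec v) ^ 2 ≤ (v ⬝ᵥ v) * (v ⬝ᵥ v) := by
    have e1 : v ⬝ᵥ v = ∑ i, v i ^ 2 := by simp [dotProduct, sq]
    have e2 : Q.mulVec v ⬝ᵥ Q.mulVec v = ∑ i, (Q.mulVec v) i ^ 2 := by
      simp [dotProduct, sq]
    calc (v ⬝ᵥ Q.mulVec v) ^ 2 = (∑ i, v i * Q.mulVec v i) ^ 2 := rfl
      _ ≤ (∑ i, v i ^ 2) * ∑ i, (Q.mulVec v) i ^ 2 := hcs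
      _ = (v ⬝ᵥ v) * (v ⬝ᵥ v) := by rw [← e1, ← e2, hnorm]
  have hvv : 0 ≤ v ⬝ᵥ v := by
    simp only [dotProduct]
    exact Finset.sum_nonneg fun i _ => mul_self_nonneg _
  nlinarith [h1, hvv]

open scoped MatrixOrder in
lemma trace_orth_mul_le {n : ℕ} (Q S : Matrix (Fin n) (Fin n) ℝ)
    (hQ : Qᵀ * Q = 1) (hS : S.PosSemidef) : (Q * S).trace ≤ S.trace := by
  set B := CFC.sqrt S with hBdef
  have hBB : B * B = S := CFC.sqrt_mul_sqrt_self S hS.nonneg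
  have hBsym : Bᵀ = B := by
    have := (CFC.sqrt_nonneg S).posSemidef.isHermitian
    simpa [Matrix.IsHermitian, conjTranspose_eq_transpose_of_trivial] using this
  have htr : (Q * S).trace = (B * Q * B).trace := by
    rw [← hBB, ← mul_assoc, trace_mul_comm, ← mul_assoc]
  rw [htr]
  have hSdiag : ∀ i, (B * Q * B) i i ≤ S i i := by
    intro i
    have hv : (B * Q * B) i i = (fun j => B i j) ⬝ᵥ Q.mulVec (fun j => B i j) := by
      simp only [mul_apply, dotProduct, Matrix.mulVec, Finset.sum_mul, Finset.mul_sum]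
      rw [Finset.sum_comm]
      apply Finset.sum_congr rfl; intro k _
      apply Finset.sum_congr rfl; intro j _
      have h := congrFun (congrFun hBsym j) i
      rw [transpose_apply] at h
      rw [← h]; ring
    have hSv : S i i = (fun j => B i j) ⬝ᵥ (fun j => B i j) := by
      rw [← hBB]
      simp only [mul_apply, dotProduct]
      apply Finset.sum_congr rfl; intro j _
      have h := congrFun (congrFun hBsym j) i
      rw [transpose_apply] at h
      rw [← h]
    rw [hv, hSv]
    exact dot_mulVec_le hQ _
  simpa [Matrix.trace, Matrix.diag] using Finset.sum_le_sum (fun i _ => hSdiag i)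

theorem stmt_8 {n d : ℕ} (hnd : n ≤ d) (V : Matrix (Fin n) (Fin d) ℝ)
    (hrank : V.rank = n) (Pstar : Matrix (Fin n) (Fin n) ℝ)
    (hPstar : Pstar.PosDef) (hPsq : Pstar * Pstar = (V * Vᵀ)⁻¹)
    (P : Matrix (Fin n) (Fin n) ℝ) (hP : (P * V) * (P * V)ᵀ = 1) :
    ((Pstar * V - V) * (Pstar * V - V)ᵀ).trace ≤ ((P * V - V) * (P * V - V)ᵀ).trace := by
  set Sig : Matrix (Fin n) (Fin n) ℝ := V * Vᵀ with hSigdef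
  -- Sig is positive definite
  have hrows : LinearIndependent ℝ (fun i => V i) := by
    rw [linearIndependent_iff_card_eq_finrank_span]
    have := V.rank_eq_finrank_span_row
    rw [hrank] at this
    simp [Set.finrank] at this ⊢
    exact this
  have hVinj : Function.Injective fun x : Fin n → ℝ => x ᵥ* V := by
    have := Matrix.vecMul_injective_iff (R := ℝ) (M := V)
    exact this.mpr hrows
  have hSig : Sig.PosDef := by
    refine Matrix.PosDef.of_dotProduct_mulVec_pos ?_ ?_
    · show Sigᴴ = Sig
      simp [hSigdef, conjTranspose, transpose_mul]
      ext i j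
      simp [mul_apply]
    · intro x hx
      have hxV : x ᵥ* V ≠ 0 := by
        intro h
        apply hx
        have : x ᵥ* V = (0 : Fin n → ℝ) ᵥ* V := by simpa using h
        exact hVinj this
      have hform : x ⬝ᵥ Sig.mulVec x = (x ᵥ* V) ⬝ᵥ (x ᵥ* V) := by
        rw [hSigdef, ← mulVec_mulVec, dotProduct_mulVec, mulVec_transpose]
      simp only [star_trivial]
      rw [hform]
      have : 0 < (x ᵥ* V) ⬝ᵥ (x ᵥ* V) := by
        have hne : ∃ j, (x ᵥ* V) j ≠ 0 := by
          by_contra h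
          push_neg at h
          exact hxV (funext h)
        obtain ⟨j, hj⟩ := hne
        have : (0:ℝ) < ∑ k, (x ᵥ* V) k * (x ᵥ* V) k := by
          apply Finset.sum_pos' (fun k _ => mul_self_nonneg _)
          exact ⟨j, Finset.mem_univ j, mul_self_pos.mpr hj⟩
        simpa [dotProduct] using this
      simpa using this
  have hSigunit : IsUnit Sig.det := (isUnit_iff_isUnit_det _).mp hSig.isUnit
  have hPunit : IsUnit Pstar.det := (isUnit_iff_isUnit_det _).mp hPstar.isUnit
  -- Sig = (Pstar * Pstar)⁻¹
  have hSigeq : (Pstar * Pstar)⁻¹ = Sig := by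
    rw [hPsq, Matrix.nonsing_inv_nonsing_inv _ hSigunit]
  have hPPinv : Pstar * Pstar⁻¹ = 1 := Matrix.mul_nonsing_inv _ hPunit
  have hPinvP : Pstar⁻¹ * Pstar = 1 := Matrix.nonsing_inv_mul _ hPunit
  set S : Matrix (Fin n) (Fin n) ℝ := Pstar⁻¹ with hSdef
  have hSS : S * S = Sig := by
    rw [hSdef, ← Matrix.mul_inv_rev, hSigeq]
  have hSpd : S.PosDef := hPstar.inv
  have hSsym : Sᵀ = S := by
    have := hSpd.isHermitian
    simpa [Matrix.IsHermitian, conjTranspose_eq_transpose_of_trivial] using this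
  have hPstarsym : Pstarᵀ = Pstar := by
    have := hPstar.isHermitian
    simpa [Matrix.IsHermitian, conjTranspose_eq_transpose_of_trivial] using this
  -- Pstar * Sig = S
  have hPstarSig : Pstar * Sig = S := by
    rw [← hSS, ← mul_assoc, hSdef, hPPinv, one_mul]
  -- Pstar satisfies the constraint
  have hPstarC : Pstar * Sig * Pstarᵀ = 1 := by
    rw [hPstarsym, hPstarSig, hSdef, hPinvP]
  -- P's constraint restated
  have hPC : P * Sig * Pᵀ = 1 := by
    have : P * V * (P * V)ᵀ = P * Sig * Pᵀ := by
      rw [transpose_mul, hSigdef]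
      simp only [Matrix.mul_assoc]
    rw [← this, hP]
  -- key inequality: trace (P * Sig) ≤ trace S
  have hkey : (P * Sig).trace ≤ S.trace := by
    have hQ : (P * S)ᵀ * (P * S) = 1 := by
      have h1 : (P * S) * (P * S)ᵀ = 1 := by
        rw [transpose_mul, hSsym]
        calc P * S * (S * Pᵀ) = P * (S * S) * Pᵀ := by noncomm_ring
          _ = 1 := by rw [hSS]; exact hPC
      exact mul_eq_one_comm.mp h1
    have : P * Sig = (P * S) * S := by rw [mul_assoc, hSS]
    rw [this]
    exact trace_orth_mul_le (P * S) S hQ hSpd.posSemidef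
  -- expand both objectives
  have expand : ∀ M : Matrix (Fin n) (Fin n) ℝ, M * Sig * Mᵀ = 1 →
      ((M * V - V) * (M * V - V)ᵀ).trace = (1 : Matrix (Fin n) (Fin n) ℝ).trace - 2 * (M * Sig).trace + Sig.trace := by
    intro M hM
    have h1 : (M * V - V) * (M * V - V)ᵀ
        = M * Sig * Mᵀ - M * Sig - Sig * Mᵀ + Sig := by
      rw [transpose_sub, transpose_mul, hSigdef]
      simp only [Matrix.sub_mul, Matrix.mul_sub, Matrix.mul_assoc]
      abel
    rw [h1, hM]
    have h2 : (Sig * Mᵀ).trace = (M * Sig).trace := by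
      have : Sig * Mᵀ = (M * Sigᵀ)ᵀ := by rw [transpose_mul, transpose_transpose]
      have hSigsym : Sigᵀ = Sig := by
        rw [hSigdef, transpose_mul, transpose_transpose]
      rw [this, hSigsym, trace_transpose]
    rw [trace_add, trace_sub, trace_sub, h2]
    ring
  rw [expand Pstar hPstarC, expand P hPC, hPstarSig]
  have : (P * Sig).trace ≤ S.trace := hkey
  linarith
end

section
/- Let Σ be a symmetric positive definite n×n matrix. The map P ↦ tr((P V − V)(P V − V)ᵀ) over {P : P Σ Pᵀ = I}, where Σ = V Vᵀ, attains its minimum value n + tr(Σ) − 2 tr(Σ^{1/2}). -/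
open Matrix

private lemma trace_mul_transpose_self_nonneg {n : ℕ} (B : Matrix (Fin n) (Fin n) ℝ) :
    0 ≤ (B * Bᵀ).trace := by
  rw [Matrix.trace]
  apply Finset.sum_nonneg
  intro i _
  rw [Matrix.diag_apply, Matrix.mul_apply]
  apply Finset.sum_nonneg
  intro j _
  simp [mul_self_nonneg]

/-- For PSD S and orthogonal Q (Q*Qᵀ=1), tr(S*Q) ≤ tr S. -/
private lemma trace_mul_orth_le {n : ℕ} (S Q : Matrix (Fin n) (Fin n) ℝ)
    (hS : S.PosSemidef) (hQ : Q * Qᵀ = 1) : (S * Q).trace ≤ S.trace := by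
  obtain ⟨R, hRR, hRT⟩ : ∃ R : Matrix (Fin n) (Fin n) ℝ, R * R = S ∧ Rᵀ = R := by
    open scoped MatrixOrder in
    refine ⟨CFC.sqrt S, CFC.sqrt_mul_sqrt_self S hS.nonneg, ?_⟩
    open scoped MatrixOrder in
    have := (CFC.sqrt_nonneg S).posSemidef.1
    rwa [Matrix.IsHermitian, conjTranspose_eq_transpose_of_trivial] at this
  have key : 0 ≤ ((R * (1 - Q)) * (R * (1 - Q))ᵀ).trace :=
    trace_mul_transpose_self_nonneg _
  have expand : ((R * (1 - Q)) * (R * (1 - Q))ᵀ).trace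
      = 2 * S.trace - 2 * (S * Q).trace := by
    have hSQT : (S * Qᵀ).trace = (S * Q).trace := by
      rw [← Matrix.trace_transpose (S * Qᵀ), Matrix.transpose_mul, Matrix.transpose_transpose,
        ← hRR, Matrix.transpose_mul, hRT, Matrix.trace_mul_comm]
    have hconj : (R * (1 - Q)) * (R * (1 - Q))ᵀ = R * ((1 - Q) * (1 - Q)ᵀ) * R := by
      rw [Matrix.transpose_mul, hRT]
      noncomm_ring
    rw [hconj, Matrix.trace_mul_comm, ← Matrix.mul_assoc, hRR]
    have h2 : (1 - Q) * (1 - Q)ᵀ = 1 + 1 - Q - Qᵀ := by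
      have h3 : (1 - Q) * (1 - Q)ᵀ = 1 - Qᵀ - Q + Q * Qᵀ := by
        rw [Matrix.transpose_sub, Matrix.transpose_one]
        noncomm_ring
      rw [h3, hQ]
      abel
    rw [h2]
    have h4 : S * (1 + 1 - Q - Qᵀ) = S + S - S * Q - S * Qᵀ := by
      rw [Matrix.mul_sub, Matrix.mul_sub, Matrix.mul_add, Matrix.mul_one]
    rw [h4, Matrix.trace_sub, Matrix.trace_sub, Matrix.trace_add, hSQT]
    ring
  rw [expand] at key
  linarith

private lemma obj_formula {n d : ℕ} (V : Matrix (Fin n) (Fin d) ℝ)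
    (P : Matrix (Fin n) (Fin n) ℝ) :
    ((P * V - V) * (P * V - V)ᵀ).trace
      = (P * (V * Vᵀ) * Pᵀ).trace + (V * Vᵀ).trace - 2 * (P * (V * Vᵀ)).trace := by
  have hVVP : ((V * Vᵀ) * Pᵀ).trace = (P * (V * Vᵀ)).trace := by
    rw [← Matrix.trace_transpose ((V * Vᵀ) * Pᵀ), Matrix.transpose_mul,
      Matrix.transpose_transpose, Matrix.transpose_mul, Matrix.transpose_transpose]
  have hPVV : ((P * V) * Vᵀ).trace = (P * (V * Vᵀ)).trace := by rw [Matrix.mul_assoc]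
  have hexp : (P * V - V) * (P * V - V)ᵀ
      = P * (V * Vᵀ) * Pᵀ - (P * V) * Vᵀ - (V * Vᵀ) * Pᵀ + V * Vᵀ := by
    rw [Matrix.transpose_sub, Matrix.transpose_mul, Matrix.sub_mul, Matrix.mul_sub,
      Matrix.mul_sub]
    simp only [Matrix.mul_assoc]
    abel
  rw [hexp, Matrix.trace_add, Matrix.trace_sub, Matrix.trace_sub, hVVP, hPVV]
  ring

theorem stmt_11 {n d : ℕ} (hnd : n ≤ d) (V : Matrix (Fin n) (Fin d) ℝ)
    (hrank : V.rank = n) (S : Matrix (Fin n) (Fin n) ℝ)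
    (hS : S.PosDef) (hSsq : S * S = V * Vᵀ) :
    IsLeast {t : ℝ | ∃ P : Matrix (Fin n) (Fin n) ℝ,
        P * (V * Vᵀ) * Pᵀ = 1 ∧ t = ((P * V - V) * (P * V - V)ᵀ).trace}
      ((n : ℝ) + (V * Vᵀ).trace - 2 * S.trace) := by
  have hST : Sᵀ = S := by
    have := hS.1
    rwa [Matrix.IsHermitian, conjTranspose_eq_transpose_of_trivial] at this
  have hdet : IsUnit S.det := (Matrix.isUnit_iff_isUnit_det S).mp hS.isUnit
  have h1 : S⁻¹ * (V * Vᵀ) * S⁻¹ᵀ = 1 := by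
    rw [← hSsq, Matrix.transpose_nonsing_inv, hST, Matrix.mul_assoc, Matrix.mul_assoc,
      Matrix.mul_nonsing_inv _ hdet, Matrix.mul_one, Matrix.nonsing_inv_mul _ hdet]
  constructor
  · -- membership: P = S⁻¹
    refine ⟨S⁻¹, h1, ?_⟩
    rw [obj_formula, h1, Matrix.trace_one]
    have h2 : S⁻¹ * (V * Vᵀ) = S := by
      rw [← hSsq, ← Matrix.mul_assoc, Matrix.nonsing_inv_mul _ hdet, Matrix.one_mul]
    rw [h2, Fintype.card_fin]
  · -- lower bound
    rintro t ⟨P, hP, rfl⟩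
    rw [obj_formula, hP, Matrix.trace_one, Fintype.card_fin]
    have hQorth : (P * S) * (P * S)ᵀ = 1 := by
      rw [Matrix.transpose_mul, hST]
      calc P * S * (S * Pᵀ) = P * (S * S) * Pᵀ := by noncomm_ring
        _ = 1 := by rw [hSsq, hP]
    have hle : (P * (V * Vᵀ)).trace ≤ S.trace := by
      have h3 : P * (V * Vᵀ) = (P * S) * S := by rw [← hSsq]; noncomm_ring
      rw [h3, Matrix.trace_mul_comm]
      exact trace_mul_orth_le S (P * S) hS.posSemidef hQorth
    linarith
end
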